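/- Upper bound of Theorem 4.3: Fix a profile (f_1,…,f_n) of piecewise constant value density functions and a piecewise constant misreport f_1' by agent 1. Let A and y_1 be the MNW allocation and fraction computed by the Partial Allocation mechanism for the profile (f_1,…,f_n), and let A' and y_1' be those computed for (f_1', f_2,…,f_n). Then v_1(A_1') ≤ e · y_1 · v_1(A_1). Since the piece agent 1 receives from the PA mechanism after misreporting is contained in A_1' and his truthful PA utility is y_1 · v_1(A_1), the incentive ratio of the Partial Allocation mechanism in cake cutting is at most e. -/

import Mathlib

open MeasureTheory Set

noncomputable def cakeval (f : ℝ → ℝ) (S : Set ℝ) : ℝ := ∫ x in S, f x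

def PiecewiseConstant (f : ℝ → ℝ) : Prop :=
  ∃ (m : ℕ) (a : Fin (m + 1) → ℝ) (c : Fin m → ℝ),
    a 0 = 0 ∧ a (Fin.last m) = 1 ∧ Monotone a ∧
    ∀ t : Fin m, ∀ x ∈ Set.Ico (a t.castSucc) (a t.succ), f x = c t

def ValidDensity (f : ℝ → ℝ) : Prop :=
  PiecewiseConstant f ∧ (∀ x, 0 ≤ f x) ∧ 0 < cakeval f (Set.Icc 0 1)

def FinUnionIcc (S : Set ℝ) : Prop :=
  ∃ (k : ℕ) (a b : Fin k → ℝ), S = ⋃ j, Set.Icc (a j) (b j)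

def IsAllocOn {n : ℕ} (C : Set ℝ) (A : Fin n → Set ℝ) : Prop :=
  (∀ i, A i ⊆ C) ∧ (∀ i, FinUnionIcc (A i)) ∧
    Pairwise fun i j => volume (A i ∩ A j) = 0

def IsAlloc {n : ℕ} (A : Fin n → Set ℝ) : Prop := IsAllocOn (Set.Icc 0 1) A

def CompleteAlloc {n : ℕ} (A : Fin n → Set ℝ) : Prop := (⋃ i, A i) = Set.Icc (0 : ℝ) 1

noncomputable def nashProd {n : ℕ} (f : Fin n → ℝ → ℝ) (A : Fin n → Set ℝ) : ℝ :=
  ∏ i, cakeval (f i) (A i)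

def IsMNWOn {n : ℕ} (C : Set ℝ) (f : Fin n → ℝ → ℝ) (A : Fin n → Set ℝ) : Prop :=
  IsAllocOn C A ∧ ∀ B : Fin n → Set ℝ, IsAllocOn C B → nashProd f B ≤ nashProd f A

def IsMNW {n : ℕ} (f : Fin n → ℝ → ℝ) (A : Fin n → Set ℝ) : Prop :=
  IsMNWOn (Set.Icc 0 1) f A

def IsCompleteMNW {n : ℕ} (f : Fin n → ℝ → ℝ) (A : Fin n → Set ℝ) : Prop :=
  IsAlloc A ∧ CompleteAlloc A ∧
    ∀ B : Fin n → Set ℝ, IsAlloc B → CompleteAlloc B → nashProd f B ≤ nashProd f A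

lemma pa_measurable {S : Set ℝ} (h : FinUnionIcc S) : MeasurableSet S := by
  obtain ⟨k, a, b, rfl⟩ := h
  exact MeasurableSet.iUnion fun j => measurableSet_Icc

lemma pa_cakeval_nonneg {f : ℝ → ℝ} (hf : ∀ x, 0 ≤ f x) {S : Set ℝ}
    (hS : MeasurableSet S) : 0 ≤ cakeval f S :=
  setIntegral_nonneg hS fun x _ => hf x

lemma pa_find_piece {M : ℕ} {a : Fin (M + 1) → ℝ} (ha0 : a 0 = 0)
    (hal : a (Fin.last M) = 1) (hmono : Monotone a) {u : ℝ} (hu0 : 0 ≤ u) (hu1 : u < 1) :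
    ∃ t : Fin M, a t.castSucc ≤ u ∧ u < a t.succ := by
  classical
  set F := Finset.univ.filter (fun i : Fin (M + 1) => a i ≤ u) with hF
  have h0F : (0 : Fin (M + 1)) ∈ F := by simp [hF, ha0, hu0]
  have hne : F.Nonempty := ⟨0, h0F⟩
  set i0 := F.max' hne with hi0def
  have hi0 : a i0 ≤ u := (Finset.mem_filter.1 (F.max'_mem hne)).2
  have hlast : i0 ≠ Fin.last M := by
    intro h
    rw [h, hal] at hi0; linarith
  have hv : i0.val < M := Fin.val_lt_last hlast
  refine ⟨⟨i0.val, hv⟩, ?_, ?_⟩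
  · have : (⟨i0.val, hv⟩ : Fin M).castSucc = i0 := by
      ext; simp
    rw [this]; exact hi0
  · by_contra hcon
    push_neg at hcon
    have hmem : (⟨i0.val, hv⟩ : Fin M).succ ∈ F := by
      simp only [hF, Finset.mem_filter, Finset.mem_univ, true_and]
      exact hcon
    have hle := F.le_max' _ hmem
    rw [← hi0def] at hle
    have : i0 < (⟨i0.val, hv⟩ : Fin M).succ := by
      rw [Fin.lt_def]; simp
    exact absurd hle (not_le.2 this)

lemma pa_Ico_disj {m : ℕ} {r : Fin (m + 1) → ℝ} (hmono : Monotone r) {s t : Fin m}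
    (hst : s ≠ t) {x : ℝ} (hs : x ∈ Set.Ico (r s.castSucc) (r s.succ))
    (ht : x ∈ Set.Ico (r t.castSucc) (r t.succ)) : False := by
  rcases lt_or_gt_of_ne hst with h | h
  · have hv : (s.val : ℕ) < t.val := h
    have : r s.succ ≤ r t.castSucc := by
      apply hmono
      rw [Fin.le_def]
      simp only [Fin.val_succ, Fin.coe_castSucc]
      omega
    exact absurd (lt_of_lt_of_le hs.2 (this.trans ht.1)) (lt_irrefl x)
  · have hv : (t.val : ℕ) < s.val := h
    have : r t.succ ≤ r s.castSucc := by
      apply hmono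
      rw [Fin.le_def]
      simp only [Fin.val_succ, Fin.coe_castSucc]
      omega
    exact absurd (lt_of_lt_of_le ht.2 (this.trans hs.1)) (lt_irrefl x)

lemma pa_prod_le_exp {ι : Type*} (s : Finset ι) (q : ι → ℝ) (hq : ∀ i ∈ s, 0 ≤ q i)
    (hsum : ∑ i ∈ s, q i ≤ s.card + 1) : ∏ i ∈ s, q i ≤ Real.exp 1 := by
  rcases Nat.eq_zero_or_pos s.card with hk | hk
  · rw [Finset.card_eq_zero.1 hk]
    simpa using (Real.add_one_le_exp 1).trans' (by norm_num)
  · set k := s.card with hkdef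
    have hk0 : (k : ℝ) ≠ 0 := by positivity
    have hgm := Real.geom_mean_le_arith_mean_weighted s (fun _ => 1 / k) q
      (fun i _ => by positivity) (by simp [Finset.sum_const, hkdef]; field_simp; exact div_self (Nat.cast_ne_zero.2 hk.ne')) hq
    have h1 : ∑ i ∈ s, 1 / (k : ℝ) * q i = (∑ i ∈ s, q i) / k := by
      rw [← Finset.mul_sum]; ring
    have h2 : ∏ i ∈ s, q i ^ (1 / (k : ℝ)) ≤ (k + 1) / k := by
      refine hgm.trans ?_
      rw [h1]
      apply div_le_div_of_nonneg_right ?_ (by positivity) |>.trans_eq rfl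
      · exact hsum
    have hprodeq : ∏ i ∈ s, q i = (∏ i ∈ s, q i ^ (1 / (k : ℝ))) ^ k := by
      rw [← Finset.prod_pow]
      refine Finset.prod_congr rfl fun i hi => ?_
      rw [← Real.rpow_natCast (q i ^ (1 / (k : ℝ))) k, ← Real.rpow_mul (hq i hi)]
      field_simp; simp
    rw [hprodeq]
    have hbase : (0 : ℝ) ≤ ∏ i ∈ s, q i ^ (1 / (k : ℝ)) :=
      Finset.prod_nonneg fun i hi => Real.rpow_nonneg (hq i hi) _
    calc (∏ i ∈ s, q i ^ (1 / (k : ℝ))) ^ k ≤ (((k : ℝ) + 1) / k) ^ k := by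
          exact pow_le_pow_left₀ hbase h2 k
      _ ≤ (Real.exp (1 / k)) ^ k := by
          apply pow_le_pow_left₀ (by positivity)
          have := Real.add_one_le_exp (1 / (k : ℝ))
          have heq : ((k : ℝ) + 1) / k = 1 / k + 1 := by field_simp; ring
          linarith [heq ▸ this]
      _ = Real.exp 1 := by
          rw [← Real.exp_nat_mul]
          congr 1; field_simp

lemma pa_cakeval_eq_sum {m : ℕ} {r : Fin (m + 1) → ℝ} (hr0 : r 0 = 0)
    (hrl : r (Fin.last m) = 1) (hmono : Monotone r) (f : ℝ → ℝ) (c : Fin m → ℝ)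
    (hc : ∀ s : Fin m, ∀ x ∈ Set.Ico (r s.castSucc) (r s.succ), f x = c s)
    {S : Set ℝ} (hS : MeasurableSet S) (hS1 : S ⊆ Set.Icc 0 1) :
    cakeval f S
      = ∑ s : Fin m, c s * (volume (S ∩ Set.Ico (r s.castSucc) (r s.succ))).toReal := by
  classical
  set step : ℝ → ℝ :=
    fun x => ∑ s : Fin m, (Set.Ico (r s.castSucc) (r s.succ)).indicator (fun _ => c s) x
    with hstep
  have hfin : ∀ s : Fin m, volume (S ∩ Set.Ico (r s.castSucc) (r s.succ)) ≠ ⊤ := by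
    intro s
    refine ne_top_of_le_ne_top ?_ (measure_mono Set.inter_subset_right)
    simp [Real.volume_Ico]
  have hae : f =ᵐ[volume.restrict S] step := by
    have h1 : ∀ᵐ x ∂(volume.restrict S), x ≠ 1 := by
      refine ae_iff.2 ?_
      have : {x : ℝ | ¬ x ≠ 1} = {1} := by ext x; simp
      rw [this]
      exact le_antisymm ((Measure.restrict_apply_le _ _).trans (by simp)) (zero_le)
    have h2 : ∀ᵐ x ∂(volume.restrict S), x ∈ S := ae_restrict_mem hS
    filter_upwards [h1, h2] with x hx1 hx2
    have hx01 : x ∈ Set.Icc (0 : ℝ) 1 := hS1 hx2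
    have hxlt : x < 1 := lt_of_le_of_ne hx01.2 hx1
    obtain ⟨t, ht1, ht2⟩ := pa_find_piece hr0 hrl hmono hx01.1 hxlt
    have hft : f x = c t := hc t x ⟨ht1, ht2⟩
    have hstepx : step x = c t := by
      simp only [hstep]
      rw [Finset.sum_eq_single t]
      · simp [Set.indicator_of_mem, ht1, ht2, Set.mem_Ico]
      · intro s _ hst
        apply Set.indicator_of_notMem
        intro hmem
        exact pa_Ico_disj hmono hst hmem ⟨ht1, ht2⟩
      · intro h; exact absurd (Finset.mem_univ t) h
    exact hft.trans hstepx.symm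
  have hint : ∀ s : Fin m, Integrable
      ((Set.Ico (r s.castSucc) (r s.succ)).indicator (fun _ => c s))
      (volume.restrict S) := by
    intro s
    rw [integrable_indicator_iff measurableSet_Ico]
    refine integrableOn_const (lt_top_iff_ne_top.1 ?_)
    rw [Measure.restrict_apply measurableSet_Ico]
    exact lt_top_iff_ne_top.2 (by rw [Set.inter_comm]; exact hfin s)
  calc cakeval f S = ∫ x in S, step x := integral_congr_ae hae
    _ = ∑ s : Fin m, ∫ x in S,
          (Set.Ico (r s.castSucc) (r s.succ)).indicator (fun _ => c s) x :=
        integral_finset_sum _ fun s _ => hint s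
    _ = ∑ s : Fin m, c s * (volume (S ∩ Set.Ico (r s.castSucc) (r s.succ))).toReal := by
        refine Finset.sum_congr rfl fun s _ => ?_
        rw [setIntegral_indicator measurableSet_Ico, setIntegral_const]
        simp [mul_comm, Measure.real]

lemma pa_col_sum {N : ℕ} {B : Fin N → Set ℝ}
    (hBm : ∀ j, MeasurableSet (B j))
    (hBd : Pairwise fun i j => volume (B i ∩ B j) = 0)
    {I : Set ℝ} (hI : MeasurableSet I) (hIfin : volume I ≠ ⊤) :
    ∑ j, (volume (B j ∩ I)).toReal ≤ (volume I).toReal := by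
  classical
  have hdisj : (↑(Finset.univ : Finset (Fin N)) : Set (Fin N)).Pairwise
      (Function.onFun (MeasureTheory.AEDisjoint volume) (fun j => B j ∩ I)) := by
    intro i _ j _ hij
    exact measure_mono_null (by intro x hx; exact ⟨hx.1.1, hx.2.1⟩) (hBd hij)
  have hmeq : volume (⋃ j ∈ (Finset.univ : Finset (Fin N)), (B j ∩ I))
      = ∑ j, volume (B j ∩ I) :=
    measure_biUnion_finset₀ hdisj fun j _ => ((hBm j).inter hI).nullMeasurableSet
  have hle : volume (⋃ j ∈ (Finset.univ : Finset (Fin N)), (B j ∩ I)) ≤ volume I := by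
    refine measure_mono ?_
    intro x hx
    simp only [Set.mem_iUnion] at hx
    obtain ⟨j, _, hj⟩ := hx
    exact hj.2
  rw [hmeq] at hle
  have hfin : ∀ j ∈ (Finset.univ : Finset (Fin N)), volume (B j ∩ I) ≠ ⊤ := by
    intro j _
    exact ne_top_of_le_ne_top hIfin (measure_mono Set.inter_subset_right)
  rw [← ENNReal.toReal_sum hfin]
  exact ENNReal.toReal_mono hIfin hle

lemma pa_exists_alloc {N m : ℕ} {r : Fin (m + 1) → ℝ} (hr0 : r 0 = 0)
    (hrl : r (Fin.last m) = 1) (hmono : Monotone r)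
    (x : Fin N → Fin m → ℝ) (hx0 : ∀ j s, 0 ≤ x j s) (hcol : ∀ s, ∑ j, x j s ≤ 1) :
    ∃ B : Fin N → Set ℝ, IsAlloc B ∧ ∀ j s,
      volume (B j ∩ Set.Ico (r s.castSucc) (r s.succ))
        = ENNReal.ofReal ((r s.succ - r s.castSucc) * x j s) := by
  classical
  set len : Fin m → ℝ := fun s => r s.succ - r s.castSucc with hlendef
  have hlen : ∀ s, 0 ≤ len s := fun s =>
    sub_nonneg.2 (hmono (le_of_lt ((Fin.castSucc_lt_succ (i := s)))))
  set Lo : Fin N → Fin m → ℝ := fun j s =>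
    r s.castSucc + len s * ∑ i ∈ Finset.univ.filter (· < j), x i s with hLodef
  set Hi : Fin N → Fin m → ℝ := fun j s => Lo j s + len s * x j s with hHidef
  set B : Fin N → Set ℝ := fun j => ⋃ s, Set.Icc (Lo j s) (Hi j s) with hBdef
  have hsumnn : ∀ (j : Fin N) (s : Fin m), 0 ≤ ∑ i ∈ Finset.univ.filter (· < j), x i s :=
    fun j s => Finset.sum_nonneg fun i _ => hx0 i s
  have hpart : ∀ (j : Fin N) (s : Fin m),
      (∑ i ∈ Finset.univ.filter (· < j), x i s) + x j s ≤ 1 := by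
    intro j s
    have hnotmem : j ∉ Finset.univ.filter (· < j) := by simp
    have h1 : (∑ i ∈ insert j (Finset.univ.filter (· < j)), x i s)
        = x j s + ∑ i ∈ Finset.univ.filter (· < j), x i s := Finset.sum_insert hnotmem
    have h2 : (∑ i ∈ insert j (Finset.univ.filter (· < j)), x i s) ≤ ∑ i, x i s :=
      Finset.sum_le_sum_of_subset_of_nonneg (by intro k _; simp)
        (fun i _ _ => hx0 i s)
    have := (hcol s)
    linarith
  have hLo_ge : ∀ j s, r s.castSucc ≤ Lo j s := fun j s =>
    le_add_of_nonneg_right (mul_nonneg (hlen s) (hsumnn j s))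
  have hHi_le : ∀ j s, Hi j s ≤ r s.succ := by
    intro j s
    have h1 := hpart j s
    have h2 := hlen s
    have : Hi j s = r s.castSucc
        + len s * ((∑ i ∈ Finset.univ.filter (· < j), x i s) + x j s) := by
      simp only [hHidef, hLodef]; ring
    rw [this]
    have h3 : len s = r s.succ - r s.castSucc := rfl
    have h4 := mul_le_of_le_one_right h2 h1
    linarith
  have hLoHi : ∀ j s, Lo j s ≤ Hi j s := fun j s =>
    le_add_of_nonneg_right (mul_nonneg (hlen s) (hx0 j s))
  have horder : ∀ (i j : Fin N) (s : Fin m), i < j → Hi i s ≤ Lo j s := by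
    intro i j s hij
    have hsub : insert i (Finset.univ.filter (· < i)) ⊆ Finset.univ.filter (· < j) := by
      intro k hk
      simp only [Finset.mem_insert, Finset.mem_filter, Finset.mem_univ, true_and] at hk ⊢
      rcases hk with rfl | hk
      · exact hij
      · exact hk.trans hij
    have h1 : (∑ k ∈ insert i (Finset.univ.filter (· < i)), x k s)
        ≤ ∑ k ∈ Finset.univ.filter (· < j), x k s :=
      Finset.sum_le_sum_of_subset_of_nonneg hsub (fun k _ _ => hx0 k s)
    have h2 : (∑ k ∈ insert i (Finset.univ.filter (· < i)), x k s)
        = x i s + ∑ k ∈ Finset.univ.filter (· < i), x k s := Finset.sum_insert (by simp)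
    have h3 : Lo j s - Hi i s
        = len s * ((∑ k ∈ Finset.univ.filter (· < j), x k s)
          - (x i s + ∑ k ∈ Finset.univ.filter (· < i), x k s)) := by
      simp only [hHidef, hLodef]; ring
    nlinarith [hlen s, h3, h1, h2]
  have hdeg : ∀ {a b c d : ℝ}, b ≤ c → volume (Set.Icc a b ∩ Set.Icc c d) = 0 := by
    intro a b c d hbc
    refine measure_mono_null (fun x hx => ?_) (?_ : volume (Set.Icc c b) = 0)
    · exact ⟨hx.2.1, hx.1.2⟩
    · rw [Real.volume_Icc, ENNReal.ofReal_eq_zero]; linarith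
  have hR : ∀ {s t : Fin m}, s < t → r s.succ ≤ r t.castSucc := by
    intro s t hst
    apply hmono
    rw [Fin.le_def]
    simp only [Fin.val_succ, Fin.coe_castSucc]
    exact hst
  have hpiece_sub : ∀ j s, Set.Icc (Lo j s) (Hi j s) ⊆ Set.Icc (r s.castSucc) (r s.succ) :=
    fun j s y hy => ⟨(hLo_ge j s).trans hy.1, hy.2.trans (hHi_le j s)⟩
  refine ⟨B, ⟨?_, ?_, ?_⟩, ?_⟩
  · -- subset of [0,1]
    intro j
    refine Set.iUnion_subset fun s => ?_
    refine (hpiece_sub j s).trans fun y hy => ?_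
    constructor
    · calc (0:ℝ) = r 0 := hr0.symm
        _ ≤ r s.castSucc := hmono (Fin.zero_le _)
        _ ≤ y := hy.1
    · calc y ≤ r s.succ := hy.2
        _ ≤ r (Fin.last m) := hmono (Fin.le_last _)
        _ = 1 := hrl
  · -- FinUnionIcc
    intro j
    exact ⟨m, Lo j, Hi j, rfl⟩
  · -- pairwise null intersections
    intro i j hij
    have hsub : B i ∩ B j ⊆ ⋃ s, ⋃ t, Set.Icc (Lo i s) (Hi i s) ∩ Set.Icc (Lo j t) (Hi j t) := by
      rintro y ⟨hyi, hyj⟩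
      simp only [hBdef, Set.mem_iUnion] at hyi hyj ⊢
      obtain ⟨s, hs⟩ := hyi
      obtain ⟨t, ht⟩ := hyj
      exact ⟨s, t, hs, ht⟩
    refine measure_mono_null hsub (measure_iUnion_null fun s => measure_iUnion_null fun t => ?_)
    rcases lt_trichotomy s t with hst | rfl | hst
    · refine measure_mono_null (fun y hy => ?_)
        ((by rw [Real.volume_Icc]; simp) : volume (Set.Icc (r s.succ) (r s.succ)) = 0)
      exact ⟨(hR hst).trans ((hLo_ge j t).trans hy.2.1), hy.1.2.trans (hHi_le i s)⟩
    · rcases lt_or_gt_of_ne hij with h | h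
      · exact hdeg (horder i j s h)
      · rw [Set.inter_comm]; exact hdeg (horder j i s h)
    · refine measure_mono_null (fun y hy => ?_)
        ((by rw [Real.volume_Icc]; simp) : volume (Set.Icc (r t.succ) (r t.succ)) = 0)
      exact ⟨(hR hst).trans ((hLo_ge i s).trans hy.1.1), hy.2.2.trans (hHi_le j t)⟩
  · -- volume formula
    intro j s
    have hupper : volume (B j ∩ Set.Ico (r s.castSucc) (r s.succ))
        ≤ ENNReal.ofReal (len s * x j s) := by
      have hsub : B j ∩ Set.Ico (r s.castSucc) (r s.succ)
          ⊆ Set.Icc (Lo j s) (Hi j s)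
            ∪ ⋃ t, ⋃ (_ : t ≠ s), Set.Icc (Lo j t) (Hi j t)
              ∩ Set.Ico (r s.castSucc) (r s.succ) := by
        rintro y ⟨hyB, hyI⟩
        simp only [hBdef, Set.mem_iUnion] at hyB
        obtain ⟨t, ht⟩ := hyB
        by_cases hts : t = s
        · subst hts; exact Or.inl ht
        · exact Or.inr (Set.mem_iUnion.2 ⟨t, Set.mem_iUnion.2 ⟨hts, ht, hyI⟩⟩)
      have hnull : volume (⋃ t, ⋃ (_ : t ≠ s), Set.Icc (Lo j t) (Hi j t)
          ∩ Set.Ico (r s.castSucc) (r s.succ)) = 0 := by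
        refine measure_iUnion_null fun t => measure_iUnion_null fun hts => ?_
        rcases lt_or_gt_of_ne hts with h | h
        · -- t < s : piece in [.. r t.succ], Ico starts at r s.castSucc ≥ r t.succ
          refine measure_mono_null (fun y hy => ?_) (?_ : volume (Set.Icc (r s.castSucc) (r t.succ)) = 0)
          · exact ⟨hy.2.1, hy.1.2.trans (hHi_le j t)⟩
          · rw [Real.volume_Icc, ENNReal.ofReal_eq_zero]
            have := hR h
            linarith
        · -- s < t
          refine measure_mono_null (fun y hy => ?_) (?_ : volume (Set.Icc (r t.castSucc) (r s.succ)) = 0)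
          · exact ⟨(hLo_ge j t).trans hy.1.1, le_of_lt hy.2.2⟩
          · rw [Real.volume_Icc, ENNReal.ofReal_eq_zero]
            have := hR h
            linarith
      calc volume (B j ∩ Set.Ico (r s.castSucc) (r s.succ))
          ≤ volume (Set.Icc (Lo j s) (Hi j s))
            + volume (⋃ t, ⋃ (_ : t ≠ s), Set.Icc (Lo j t) (Hi j t)
              ∩ Set.Ico (r s.castSucc) (r s.succ)) :=
            (measure_mono hsub).trans (measure_union_le _ _)
        _ = volume (Set.Icc (Lo j s) (Hi j s)) := by rw [hnull, add_zero]
        _ = ENNReal.ofReal (len s * x j s) := by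
            rw [Real.volume_Icc]
            congr 1
            simp only [hHidef]
            ring
    have hlower : ENNReal.ofReal (len s * x j s)
        ≤ volume (B j ∩ Set.Ico (r s.castSucc) (r s.succ)) := by
      have hsub : Set.Ico (Lo j s) (Hi j s) ⊆ B j ∩ Set.Ico (r s.castSucc) (r s.succ) := by
        intro y hy
        constructor
        · simp only [hBdef, Set.mem_iUnion]
          exact ⟨s, hy.1, le_of_lt hy.2⟩
        · exact ⟨(hLo_ge j s).trans hy.1, lt_of_lt_of_le hy.2 (hHi_le j s)⟩
      calc ENNReal.ofReal (len s * x j s) = volume (Set.Ico (Lo j s) (Hi j s)) := by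
            rw [Real.volume_Ico]
            congr 1
            simp only [hHidef]
            ring
        _ ≤ _ := measure_mono hsub
    exact le_antisymm hupper hlower

lemma pa_price_bound {N m : ℕ} (V : Fin (N + 1) → Fin m → ℝ) (hV : ∀ j s, 0 ≤ V j s)
    (x : Fin (N + 1) → Fin m → ℝ) (hx0 : ∀ j s, 0 ≤ x j s) (hxcol : ∀ s, ∑ j, x j s ≤ 1)
    (hu : ∀ j, 0 < ∑ s, x j s * V j s)
    (hopt : ∀ y : Fin (N + 1) → Fin m → ℝ, (∀ j s, 0 ≤ y j s) → (∀ s, ∑ j, y j s ≤ 1) →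
      (∏ j, ∑ s, y j s * V j s) ≤ ∏ j, ∑ s, x j s * V j s)
    (y : Fin (N + 1) → Fin m → ℝ) (hy0 : ∀ j s, 0 ≤ y j s) (hycol : ∀ s, ∑ j, y j s ≤ 1)
    (i0 : Fin (N + 1)) :
    (∏ j ∈ Finset.univ.erase i0, ∑ s, y j s * V j s)
      ≤ Real.exp 1 * ∏ j ∈ Finset.univ.erase i0, ∑ s, x j s * V j s := by
  classical
  set u : Fin (N + 1) → ℝ := fun j => ∑ s, x j s * V j s with hudef
  have split : ∀ (s : Fin m) (w : Fin m → ℝ),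
      ∑ t, w t = w s + ∑ t ∈ Finset.univ.erase s, w t :=
    fun s w => (Finset.add_sum_erase _ _ (Finset.mem_univ s)).symm
  have splitj : ∀ (j : Fin (N + 1)) (w : Fin (N + 1) → ℝ),
      ∑ k, w k = w j + ∑ k ∈ Finset.univ.erase j, w k :=
    fun j w => (Finset.add_sum_erase _ _ (Finset.mem_univ j)).symm
  set p : Fin m → ℝ := fun s => Finset.univ.sup' ⟨0, Finset.mem_univ 0⟩
    (fun j => V j s / u j) with hpdef
  have habove : ∀ j s, V j s / u j ≤ p s := fun j s =>
    Finset.le_sup' (fun j => V j s / u j) (Finset.mem_univ j)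
  have hVle : ∀ j s, V j s ≤ u j * p s := by
    intro j s
    have := (div_le_iff₀ (hu j)).1 (habove j s)
    linarith
  have hp0 : ∀ s, 0 ≤ p s := fun s =>
    le_trans (div_nonneg (hV 0 s) (hu 0).le) (habove 0 s)
  -- exchange argument: bang-per-buck optimality
  have hexch : ∀ (i j : Fin (N + 1)) (s : Fin m), i ≠ j → 0 < x j s →
      V i s * u j ≤ V j s * u i := by
    intro i j s hij hxjs
    by_contra hcon
    push_neg at hcon
    set Δ : ℝ := V i s * u j - V j s * u i with hΔdef
    have hΔpos : 0 < Δ := by simp only [hΔdef]; linarith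
    have hVV : 0 ≤ V j s * V i s := mul_nonneg (hV j s) (hV i s)
    set ε : ℝ := min (x j s) (Δ / (V j s * V i s + 1)) with hεdef
    have hεpos : 0 < ε := lt_min hxjs (div_pos hΔpos (by linarith))
    have hεx : ε ≤ x j s := min_le_left _ _
    have hεΔ : ε * (V j s * V i s) < Δ := by
      have h1 : ε ≤ Δ / (V j s * V i s + 1) := min_le_right _ _
      have h2 : ε * (V j s * V i s + 1) ≤ Δ := by
        rw [← le_div_iff₀ (by linarith : (0:ℝ) < V j s * V i s + 1)]
        exact h1
      nlinarith
    set y' : Fin (N + 1) → Fin m → ℝ := fun k t =>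
      if k = i ∧ t = s then x k t + ε else if k = j ∧ t = s then x k t - ε else x k t
      with hy'def
    have hy'cases : ∀ k t, (k ≠ i ∨ t ≠ s) → (k ≠ j ∨ t ≠ s) → y' k t = x k t := by
      intro k t h1 h2
      simp only [hy'def]
      rw [if_neg (by tauto), if_neg (by tauto)]
    have hy'i : y' i s = x i s + ε := by simp [hy'def]
    have hy'j : y' j s = x j s - ε := by
      simp only [hy'def]
      rw [if_neg (fun h => hij h.1.symm), if_pos (by simp)]
    have hy'0 : ∀ k t, 0 ≤ y' k t := by
      intro k t
      by_cases h1 : k = i ∧ t = s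
      · obtain ⟨rfl, rfl⟩ := h1; rw [hy'i]; have := hx0 k t; linarith
      by_cases h2 : k = j ∧ t = s
      · obtain ⟨rfl, rfl⟩ := h2; rw [hy'j]; linarith
      · rw [hy'cases k t (by tauto) (by tauto)]; exact hx0 k t
    have hy'col : ∀ t, ∑ k, y' k t ≤ 1 := by
      intro t
      by_cases hts : t = s
      · subst hts
        have : ∑ k, y' k t = ∑ k, x k t := by
          rw [splitj i (fun k => y' k t), splitj i (fun k => x k t)]
          have hji : j ∈ Finset.univ.erase i := by simp [Ne.symm hij]
          rw [Finset.add_sum_erase _ _ hji |>.symm,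
            Finset.add_sum_erase _ (fun k => x k t) hji |>.symm]
          have hrest : ∑ k ∈ (Finset.univ.erase i).erase j, y' k t
              = ∑ k ∈ (Finset.univ.erase i).erase j, x k t := by
            refine Finset.sum_congr rfl fun k hk => ?_
            simp only [Finset.mem_erase] at hk
            exact hy'cases k t (Or.inl (hk.2.1)) (Or.inl hk.1)
          rw [hy'i, hy'j, hrest]
          ring
        rw [this]; exact hxcol t
      · have : ∑ k, y' k t = ∑ k, x k t :=
          Finset.sum_congr rfl fun k _ => hy'cases k t (Or.inr hts) (Or.inr hts)
        rw [this]; exact hxcol t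
    have hval : ∀ k, k ≠ i → k ≠ j → (∑ t, y' k t * V k t) = u k := by
      intro k hki hkj
      exact Finset.sum_congr rfl fun t _ => by rw [hy'cases k t (Or.inl hki) (Or.inl hkj)]
    have hvali : (∑ t, y' i t * V i t) = u i + ε * V i s := by
      simp only [hudef]
      rw [split s (fun t => y' i t * V i t), split s (fun t => x i t * V i t), hy'i]
      have : ∑ t ∈ Finset.univ.erase s, y' i t * V i t
          = ∑ t ∈ Finset.univ.erase s, x i t * V i t := by
        refine Finset.sum_congr rfl fun t ht => ?_
        rw [hy'cases i t (Or.inr (Finset.mem_erase.1 ht).1) (Or.inl (by exact hij))]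
      rw [this]; ring
    have hvalj : (∑ t, y' j t * V j t) = u j - ε * V j s := by
      simp only [hudef]
      rw [split s (fun t => y' j t * V j t), split s (fun t => x j t * V j t), hy'j]
      have : ∑ t ∈ Finset.univ.erase s, y' j t * V j t
          = ∑ t ∈ Finset.univ.erase s, x j t * V j t := by
        refine Finset.sum_congr rfl fun t ht => ?_
        rw [hy'cases j t (Or.inr (Finset.mem_erase.1 ht).1) (Or.inr (Finset.mem_erase.1 ht).1)]
      rw [this]; ring
    have hji : j ∈ Finset.univ.erase i := by simp [Ne.symm hij]
    have hprod1 : (∏ k, ∑ t, y' k t * V k t)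
        = (u i + ε * V i s) * ((u j - ε * V j s) *
          ∏ k ∈ (Finset.univ.erase i).erase j, ∑ t, y' k t * V k t) := by
      rw [← Finset.mul_prod_erase Finset.univ _ (Finset.mem_univ i),
        ← Finset.mul_prod_erase _ _ hji, hvali, hvalj]
    have hprod2 : (∏ k, u k)
        = u i * (u j * ∏ k ∈ (Finset.univ.erase i).erase j, u k) := by
      rw [← Finset.mul_prod_erase Finset.univ _ (Finset.mem_univ i),
        ← Finset.mul_prod_erase _ _ hji]
    have hresteq : (∏ k ∈ (Finset.univ.erase i).erase j, ∑ t, y' k t * V k t)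
        = ∏ k ∈ (Finset.univ.erase i).erase j, u k := by
      refine Finset.prod_congr rfl fun k hk => ?_
      simp only [Finset.mem_erase] at hk
      exact hval k hk.2.1 hk.1
    have hrestpos : 0 < ∏ k ∈ (Finset.univ.erase i).erase j, u k :=
      Finset.prod_pos fun k _ => hu k
    have hcore : u i * u j < (u i + ε * V i s) * (u j - ε * V j s) := by
      have hΔeq : (u i + ε * V i s) * (u j - ε * V j s) - u i * u j
          = ε * Δ - ε * (ε * (V j s * V i s)) := by simp only [hΔdef]; ring
      nlinarith [mul_lt_mul_of_pos_left hεΔ hεpos]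
    have hgt : (∏ k, u k) < ∏ k, ∑ t, y' k t * V k t := by
      rw [hprod1, hprod2, hresteq, ← mul_assoc, ← mul_assoc]
      exact mul_lt_mul_of_pos_right hcore hrestpos
    exact absurd (hopt y' hy'0 hy'col) (not_le.2 hgt)
  -- spending is exactly 1 for each agent
  have hbpb : ∀ j s, 0 < x j s → V j s = u j * p s := by
    intro j s hxjs
    refine le_antisymm (hVle j s) ?_
    have hsup_le : p s ≤ V j s / u j := by
      refine Finset.sup'_le _ _ fun i _ => ?_
      rcases eq_or_ne i j with rfl | hij
      · exact le_refl _
      · rw [div_le_div_iff₀ (hu i) (hu j)]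
        exact hexch i j s hij hxjs
    have := (le_div_iff₀ (hu j)).1 hsup_le
    linarith
  have hspend : ∀ j, ∑ s, x j s * p s = 1 := by
    intro j
    have h1 : u j = u j * ∑ s, x j s * p s := by
      rw [hudef, Finset.mul_sum]
      refine Finset.sum_congr rfl fun s _ => ?_
      rcases (hx0 j s).eq_or_lt with h | h
      · rw [← h]; ring
      · rw [hbpb j s h]; ring
    have h2 := hu j
    exact mul_left_cancel₀ (ne_of_gt h2) (by rw [mul_one]; exact h1.symm)
  -- saturated columns
  have hfull : ∀ s, 0 < p s → ∑ j, x j s = 1 := by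
    intro s hps
    by_contra hne
    have hlt : ∑ j, x j s < 1 := lt_of_le_of_ne (hxcol s) hne
    obtain ⟨j, _, hj⟩ := Finset.exists_mem_eq_sup' ⟨0, Finset.mem_univ 0⟩
      (fun j => V j s / u j)
    have hVj : 0 < V j s := by
      have hdiv : 0 < V j s / u j := by
        have hps' : 0 < Finset.univ.sup' ⟨0, Finset.mem_univ 0⟩
            (fun j => V j s / u j) := by simpa [hpdef] using hps
        rw [hj] at hps'
        exact hps'
      by_contra hc
      push_neg at hc
      have : V j s / u j ≤ 0 := div_nonpos_iff.2 (Or.inr ⟨hc, (hu j).le⟩)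
      linarith
    set ε : ℝ := 1 - ∑ k, x k s with hεdef
    have hεpos : 0 < ε := by simp only [hεdef]; linarith
    set y' : Fin (N + 1) → Fin m → ℝ := fun k t =>
      if k = j ∧ t = s then x k t + ε else x k t with hy'def
    have hy'cases : ∀ k t, (k ≠ j ∨ t ≠ s) → y' k t = x k t := by
      intro k t h
      simp only [hy'def]
      rw [if_neg (by tauto)]
    have hy'j : y' j s = x j s + ε := by simp [hy'def]
    have hy'0 : ∀ k t, 0 ≤ y' k t := by
      intro k t
      by_cases h : k = j ∧ t = s
      · obtain ⟨rfl, rfl⟩ := h; rw [hy'j]; have := hx0 k t; linarith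
      · rw [hy'cases k t (by tauto)]; exact hx0 k t
    have hy'col : ∀ t, ∑ k, y' k t ≤ 1 := by
      intro t
      by_cases hts : t = s
      · subst hts
        have : ∑ k, y' k t = (∑ k, x k t) + ε := by
          rw [splitj j (fun k => y' k t), splitj j (fun k => x k t), hy'j]
          have : ∑ k ∈ Finset.univ.erase j, y' k t = ∑ k ∈ Finset.univ.erase j, x k t :=
            Finset.sum_congr rfl fun k hk =>
              hy'cases k t (Or.inl (Finset.mem_erase.1 hk).1)
          rw [this]; ring
        rw [this, hεdef]; linarith
      · have : ∑ k, y' k t = ∑ k, x k t :=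
          Finset.sum_congr rfl fun k _ => hy'cases k t (Or.inr hts)
        rw [this]; exact hxcol t
    have hvalj : (∑ t, y' j t * V j t) = u j + ε * V j s := by
      simp only [hudef]
      rw [split s (fun t => y' j t * V j t), split s (fun t => x j t * V j t), hy'j]
      have : ∑ t ∈ Finset.univ.erase s, y' j t * V j t
          = ∑ t ∈ Finset.univ.erase s, x j t * V j t :=
        Finset.sum_congr rfl fun t ht =>
          by rw [hy'cases j t (Or.inr (Finset.mem_erase.1 ht).1)]
      rw [this]; ring
    have hval : ∀ k, k ≠ j → (∑ t, y' k t * V k t) = u k := fun k hk =>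
      Finset.sum_congr rfl fun t _ => by rw [hy'cases k t (Or.inl hk)]
    have hrestpos : 0 < ∏ k ∈ Finset.univ.erase j, u k :=
      Finset.prod_pos fun k _ => hu k
    have hgt : (∏ k, u k) < ∏ k, ∑ t, y' k t * V k t := by
      rw [← Finset.mul_prod_erase Finset.univ _ (Finset.mem_univ j),
        ← Finset.mul_prod_erase Finset.univ (fun k => ∑ t, y' k t * V k t) (Finset.mem_univ j),
        hvalj]
      have hresteq : (∏ k ∈ Finset.univ.erase j, ∑ t, y' k t * V k t)
          = ∏ k ∈ Finset.univ.erase j, u k :=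
        Finset.prod_congr rfl fun k hk => hval k (Finset.mem_erase.1 hk).1
      rw [hresteq]
      have : u j < u j + ε * V j s := by nlinarith
      exact mul_lt_mul_of_pos_right this hrestpos
    exact absurd (hopt y' hy'0 hy'col) (not_le.2 hgt)
  -- total prices
  have hpsum : ∑ s, p s = (N : ℝ) + 1 := by
    have h1 : ∀ s, p s = p s * ∑ j, x j s := by
      intro s
      rcases (hp0 s).eq_or_lt with h | h
      · rw [← h]; ring
      · rw [hfull s h]; ring
    calc ∑ s, p s = ∑ s, p s * ∑ j, x j s := Finset.sum_congr rfl fun s _ => h1 s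
      _ = ∑ s, ∑ j, p s * x j s := by
          refine Finset.sum_congr rfl fun s _ => ?_
          rw [Finset.mul_sum]
      _ = ∑ j : Fin (N + 1), ∑ s, x j s * p s := by
          rw [Finset.sum_comm]
          exact Finset.sum_congr rfl fun j _ => Finset.sum_congr rfl fun s _ => mul_comm _ _
      _ = ∑ j : Fin (N + 1), (1 : ℝ) := Finset.sum_congr rfl fun j _ => hspend j
      _ = (N : ℝ) + 1 := by simp [Finset.sum_const]
  -- conclude
  set q : Fin (N + 1) → ℝ := fun j => ∑ s, y j s * p s with hqdef
  have hq0 : ∀ j, 0 ≤ q j := fun j =>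
    Finset.sum_nonneg fun s _ => mul_nonneg (hy0 j s) (hp0 s)
  have hyle : ∀ j, (∑ s, y j s * V j s) ≤ u j * q j := by
    intro j
    have h1 : (∑ s, y j s * V j s) ≤ ∑ s, y j s * (u j * p s) :=
      Finset.sum_le_sum fun s _ => mul_le_mul_of_nonneg_left (hVle j s) (hy0 j s)
    refine h1.trans_eq ?_
    rw [hqdef, Finset.mul_sum]
    exact Finset.sum_congr rfl fun s _ => by ring
  have hqsum : ∑ j ∈ Finset.univ.erase i0, q j ≤ (N : ℝ) + 1 := by
    have h1 : ∑ j ∈ Finset.univ.erase i0, q j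
        = ∑ s, (∑ j ∈ Finset.univ.erase i0, y j s) * p s := by
      rw [Finset.sum_comm]
      exact Finset.sum_congr rfl fun s _ => (Finset.sum_mul _ _ _).symm
    rw [h1, ← hpsum]
    refine Finset.sum_le_sum fun s _ => ?_
    have h2 : ∑ j ∈ Finset.univ.erase i0, y j s ≤ ∑ j, y j s :=
      Finset.sum_le_sum_of_subset_of_nonneg (Finset.erase_subset _ _)
        (fun j _ _ => hy0 j s)
    have h3 : (∑ j ∈ Finset.univ.erase i0, y j s) ≤ 1 := h2.trans (hycol s)
    nlinarith [hp0 s, h3, Finset.sum_nonneg (fun j (_ : j ∈ Finset.univ.erase i0) => hy0 j s)]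
  have hcard : (Finset.univ.erase i0).card = N := by
    rw [Finset.card_erase_of_mem (Finset.mem_univ i0), Finset.card_univ, Fintype.card_fin]
    omega
  have hqprod : (∏ j ∈ Finset.univ.erase i0, q j) ≤ Real.exp 1 := by
    refine pa_prod_le_exp _ q (fun j _ => hq0 j) ?_
    rw [hcard]
    exact_mod_cast hqsum
  calc (∏ j ∈ Finset.univ.erase i0, ∑ s, y j s * V j s)
      ≤ ∏ j ∈ Finset.univ.erase i0, u j * q j :=
        Finset.prod_le_prod (fun j _ => Finset.sum_nonneg fun s _ =>
          mul_nonneg (hy0 j s) (hV j s)) (fun j _ => hyle j)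
    _ = (∏ j ∈ Finset.univ.erase i0, u j) * ∏ j ∈ Finset.univ.erase i0, q j :=
        Finset.prod_mul_distrib
    _ ≤ (∏ j ∈ Finset.univ.erase i0, u j) * Real.exp 1 :=
        mul_le_mul_of_nonneg_left hqprod (Finset.prod_nonneg fun j _ => (hu j).le)
    _ = Real.exp 1 * ∏ j ∈ Finset.univ.erase i0, ∑ s, x j s * V j s := by
        rw [mul_comm, hudef]

lemma pa_refine {m M : ℕ} {r : Fin (m + 1) → ℝ} (hrs : StrictMono r)
    (hr0 : r 0 = 0) (hrl : r (Fin.last m) = 1)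
    {a : Fin (M + 1) → ℝ} {c : Fin M → ℝ} {h : ℝ → ℝ}
    (ha0 : a 0 = 0) (hal : a (Fin.last M) = 1) (hamono : Monotone a)
    (hconst : ∀ t : Fin M, ∀ x ∈ Set.Ico (a t.castSucc) (a t.succ), h x = c t)
    (hmem : ∀ t : Fin (M + 1), ∃ i, r i = a t) (s : Fin m) :
    ∃ cc, ∀ x ∈ Set.Ico (r s.castSucc) (r s.succ), h x = cc := by
  have hu0 : 0 ≤ r s.castSucc := by rw [← hr0]; exact hrs.monotone (Fin.zero_le _)
  have hu1 : r s.castSucc < 1 := by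
    rw [← hrl]
    exact lt_of_lt_of_le (hrs ((Fin.castSucc_lt_succ (i := s)))) (hrs.monotone (Fin.le_last _))
  obtain ⟨t, ht1, ht2⟩ := pa_find_piece ha0 hal hamono hu0 hu1
  obtain ⟨i, hi⟩ := hmem t.succ
  have hlt : s.castSucc < i := hrs.lt_iff_lt.1 (by rw [hi]; exact ht2)
  have hle : s.succ ≤ i := Fin.castSucc_lt_iff_succ_le.1 hlt
  have hsucc : r s.succ ≤ a t.succ := hi ▸ hrs.monotone hle
  exact ⟨c t, fun x hx =>
    hconst t x ⟨ht1.trans hx.1, lt_of_lt_of_le hx.2 hsucc⟩⟩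

/-- An MNW allocation of the whole cake among the agents other than `i`: agent `i`
receives nothing and the allocation maximizes the Nash product of the remaining
agents' values. -/

def IsMNWWithout {n : ℕ} (f : Fin n → ℝ → ℝ) (i : Fin n) (B : Fin n → Set ℝ) : Prop :=
  IsAlloc B ∧ B i = ∅ ∧
    ∀ B' : Fin n → Set ℝ, IsAlloc B' → B' i = ∅ →
      (∏ j ∈ Finset.univ.erase i, cakeval (f j) (B' j)) ≤
        ∏ j ∈ Finset.univ.erase i, cakeval (f j) (B j)

set_option maxHeartbeats 2000000 in
/-- Upper bound of Theorem 4.3: for the Partial Allocation mechanism,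
`v_1(A_1') ≤ e · y_1 · v_1(A_1)`, where `A, y_1` come from the truthful run and
`A'` from the run on the misreported profile.  Since the piece agent 1 (index `0`)
receives after misreporting is contained in `A_1'` and his truthful PA utility is
`y_1 · v_1(A_1)`, the incentive ratio of the PA mechanism in cake cutting is at
most `e`. -/
theorem pa_incentive_ratio_upper (n : ℕ) (f : Fin (n + 1) → ℝ → ℝ) (f1' : ℝ → ℝ)
    (hf : ∀ j, ValidDensity (f j)) (hf1' : ValidDensity f1')
    (A A' A1 : Fin (n + 1) → Set ℝ)
    (hA : IsMNW f A) (hA' : IsMNW (Function.update f 0 f1') A')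
    (hA1 : IsMNWWithout f 0 A1) :
    cakeval (f 0) (A' 0) ≤
      Real.exp 1 *
        (((∏ j ∈ Finset.univ.erase 0, cakeval (f j) (A j)) /
            (∏ j ∈ Finset.univ.erase 0, cakeval (f j) (A1 j))) * cakeval (f 0) (A 0)) := by
    classical
  set g := Function.update f 0 f1' with hgdef
  have hgval : ∀ j, ValidDensity (g j) := by
    intro j
    rcases eq_or_ne j 0 with rfl | hj
    · rw [hgdef]; rw [Function.update_self]; exact hf1'
    · rw [hgdef]; rw [Function.update_of_ne hj]; exact hf j
  -- piecewise data
  choose M a c hpw using fun j => (hf j).1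
  obtain ⟨M', a', c', ha0', hal', hamono', hconst'⟩ := hf1'.1
  -- common refinement breakpoints
  set T : Finset ℝ :=
    (Finset.univ.biUnion fun j : Fin (n + 1) => Finset.univ.image (a j))
      ∪ Finset.univ.image a' with hTdef
  have haT : ∀ (j : Fin (n + 1)) (t : Fin (M j + 1)), a j t ∈ T := by
    intro j t
    rw [hTdef]
    exact Finset.mem_union_left _
      (Finset.mem_biUnion.2 ⟨j, Finset.mem_univ j, Finset.mem_image_of_mem _ (Finset.mem_univ t)⟩)
  have ha'T : ∀ t : Fin (M' + 1), a' t ∈ T := by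
    intro t
    rw [hTdef]
    exact Finset.mem_union_right _ (Finset.mem_image_of_mem _ (Finset.mem_univ t))
  have hT01 : ∀ w ∈ T, w ∈ Set.Icc (0 : ℝ) 1 := by
    intro w hw
    rw [hTdef, Finset.mem_union] at hw
    rcases hw with hw | hw
    · obtain ⟨j, _, hj⟩ := Finset.mem_biUnion.1 hw
      obtain ⟨t, _, rfl⟩ := Finset.mem_image.1 hj
      exact ⟨(hpw j).1 ▸ (hpw j).2.2.1 (Fin.zero_le t),
        (hpw j).2.1 ▸ (hpw j).2.2.1 (Fin.le_last t)⟩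
    · obtain ⟨t, _, rfl⟩ := Finset.mem_image.1 hw
      exact ⟨ha0' ▸ hamono' (Fin.zero_le t), hal' ▸ hamono' (Fin.le_last t)⟩
  have h0T : (0 : ℝ) ∈ T := ha0' ▸ ha'T 0
  have h1T : (1 : ℝ) ∈ T := hal' ▸ ha'T (Fin.last M')
  have hTpos : 0 < T.card := Finset.card_pos.2 ⟨0, h0T⟩
  set m : ℕ := T.card - 1 with hmdef
  have hcard : T.card = m + 1 := by omega
  obtain ⟨r, hrs, hmemT, hsurj⟩ : ∃ r : Fin (m + 1) → ℝ, StrictMono r ∧ (∀ i, r i ∈ T)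
      ∧ ∀ w ∈ T, ∃ i, r i = w := by
    refine ⟨fun i => (T.orderIsoOfFin hcard i : ℝ), fun i j hij => ?_, fun i => ?_, fun w hw => ?_⟩
    · exact Subtype.coe_lt_coe.2 ((T.orderIsoOfFin hcard).lt_iff_lt.2 hij)
    · exact (T.orderIsoOfFin hcard i).2
    · exact ⟨(T.orderIsoOfFin hcard).symm ⟨w, hw⟩, by simp⟩
  have hmono : Monotone r := hrs.monotone
  have hr0 : r 0 = 0 := by
    obtain ⟨i, hi⟩ := hsurj 0 h0T
    exact le_antisymm (hi ▸ hmono (Fin.zero_le i)) (hT01 _ (hmemT 0)).1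
  have hrl : r (Fin.last m) = 1 := by
    obtain ⟨i, hi⟩ := hsurj 1 h1T
    exact le_antisymm (hT01 _ (hmemT (Fin.last m))).2 (hi ▸ hmono (Fin.le_last i))
  -- refined constants
  have hcfex : ∀ (j : Fin (n + 1)) (s : Fin m),
      ∃ cc, ∀ x ∈ Set.Ico (r s.castSucc) (r s.succ), f j x = cc := fun j s =>
    pa_refine hrs hr0 hrl (hpw j).1 (hpw j).2.1 (hpw j).2.2.1 (hpw j).2.2.2
      (fun t => hsurj _ (haT j t)) s
  choose cf hcf using hcfex
  have hcf'ex : ∀ s : Fin m,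
      ∃ cc, ∀ x ∈ Set.Ico (r s.castSucc) (r s.succ), f1' x = cc := fun s =>
    pa_refine hrs hr0 hrl ha0' hal' hamono' hconst' (fun t => hsurj _ (ha'T t)) s
  choose cf' hcf' using hcf'ex
  set cg : Fin (n + 1) → Fin m → ℝ := fun j => if j = 0 then cf' else cf j with hcgdef
  have hcg : ∀ (j : Fin (n + 1)) (s : Fin m),
      ∀ x ∈ Set.Ico (r s.castSucc) (r s.succ), g j x = cg j s := by
    intro j s x hx
    rcases eq_or_ne j 0 with rfl | hj
    · have h1 : g 0 = f1' := by rw [hgdef]; exact Function.update_self _ _ _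
      have h2 : cg 0 s = cf' s := by simp [hcgdef]
      rw [h1, h2]
      exact hcf' s x hx
    · have h1 : g j = f j := by rw [hgdef]; exact Function.update_of_ne hj _ _
      have h2 : cg j s = cf j s := by simp [hcgdef, hj]
      rw [h1, h2]
      exact hcf j s x hx
  -- lengths, pieces, values
  set len : Fin m → ℝ := fun s => r s.succ - r s.castSucc with hlendef
  have hlenpos : ∀ s, 0 < len s := fun s => sub_pos.2 (hrs ((Fin.castSucc_lt_succ (i := s))))
  set I : Fin m → Set ℝ := fun s => Set.Ico (r s.castSucc) (r s.succ) with hIdef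
  have hIsub : ∀ s, I s ⊆ Set.Icc 0 1 := by
    intro s x hx
    constructor
    · calc (0:ℝ) = r 0 := hr0.symm
        _ ≤ r s.castSucc := hmono (Fin.zero_le _)
        _ ≤ x := hx.1
    · calc x ≤ r s.succ := le_of_lt hx.2
        _ ≤ r (Fin.last m) := hmono (Fin.le_last _)
        _ = 1 := hrl
  have hvolI : ∀ s, volume (I s) = ENNReal.ofReal (len s) := fun s => Real.volume_Ico
  set V : Fin (n + 1) → Fin m → ℝ := fun j s => cg j s * len s with hVdef
  have hcgnn : ∀ j s, 0 ≤ cg j s := by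
    intro j s
    have hmem : r s.castSucc ∈ Set.Ico (r s.castSucc) (r s.succ) :=
      ⟨le_refl _, hrs ((Fin.castSucc_lt_succ (i := s)))⟩
    rw [← hcg j s _ hmem]
    exact (hgval j).2.1 _
  have hcfnn : ∀ (j : Fin (n + 1)) (s : Fin m), 0 ≤ cf j s := by
    intro j s
    have hmem : r s.castSucc ∈ Set.Ico (r s.castSucc) (r s.succ) :=
      ⟨le_refl _, hrs ((Fin.castSucc_lt_succ (i := s)))⟩
    rw [← hcf j s _ hmem]
    exact (hf j).2.1 _
  have hVnn : ∀ j s, 0 ≤ V j s := fun j s => mul_nonneg (hcgnn j s) (hlenpos s).le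
  -- value decomposition for any admissible set
  have hval : ∀ (h : ℝ → ℝ) (cc : Fin m → ℝ),
      (∀ s, ∀ x ∈ Set.Ico (r s.castSucc) (r s.succ), h x = cc s) →
      ∀ S : Set ℝ, MeasurableSet S → S ⊆ Set.Icc 0 1 →
      cakeval h S = ∑ s, cc s * (volume (S ∩ I s)).toReal := by
    intro h cc hcc S hS hS1
    exact pa_cakeval_eq_sum hr0 hrl hmono h cc hcc hS hS1
  -- fraction profile of an allocation
  set xal : (Fin (n + 1) → Set ℝ) → Fin (n + 1) → Fin m → ℝ :=
    fun B j s => (volume (B j ∩ I s)).toReal / len s with hxaldef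
  have hxal0 : ∀ B j s, 0 ≤ xal B j s := fun B j s =>
    div_nonneg ENNReal.toReal_nonneg (hlenpos s).le
  have hxalcol : ∀ B : Fin (n + 1) → Set ℝ, IsAlloc B → ∀ s, ∑ j, xal B j s ≤ 1 := by
    intro B hB s
    simp only [hxaldef]
    rw [← Finset.sum_div]
    rw [div_le_one (hlenpos s)]
    have := pa_col_sum (fun j => pa_measurable (hB.2.1 j)) hB.2.2
      (show MeasurableSet (I s) from measurableSet_Ico)
      (by rw [hvolI s]; exact ENNReal.ofReal_ne_top)
    calc ∑ j, (volume (B j ∩ I s)).toReal ≤ (volume (I s)).toReal := this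
      _ = len s := by rw [hvolI s, ENNReal.toReal_ofReal (hlenpos s).le]
  have hxalval : ∀ (h : ℝ → ℝ) (cc : Fin m → ℝ),
      (∀ s, ∀ x ∈ Set.Ico (r s.castSucc) (r s.succ), h x = cc s) →
      ∀ (B : Fin (n + 1) → Set ℝ), IsAlloc B → ∀ j,
      cakeval h (B j) = ∑ s, xal B j s * (cc s * len s) := by
    intro h cc hcc B hB j
    rw [hval h cc hcc (B j) (pa_measurable (hB.2.1 j)) (hB.1 j)]
    refine Finset.sum_congr rfl fun s _ => ?_
    have hL : len s ≠ 0 := ne_of_gt (hlenpos s)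
    simp only [hxaldef]
    rw [eq_comm, div_mul_eq_mul_div, div_eq_iff hL]
    ring
  -- values of allocations built from fractions
  have hBval : ∀ (y : Fin (n + 1) → Fin m → ℝ), (∀ j s, 0 ≤ y j s) → (∀ s, ∑ j, y j s ≤ 1) →
      ∃ B : Fin (n + 1) → Set ℝ, IsAlloc B ∧
        ∀ (h : ℝ → ℝ) (cc : Fin m → ℝ),
          (∀ s, ∀ x ∈ Set.Ico (r s.castSucc) (r s.succ), h x = cc s) →
          ∀ j, cakeval h (B j) = ∑ s, y j s * (cc s * len s) := by
    intro y hy0 hycol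
    obtain ⟨B, hB, hBvol⟩ := pa_exists_alloc hr0 hrl hmono y hy0 hycol
    refine ⟨B, hB, fun h cc hcc j => ?_⟩
    rw [hval h cc hcc (B j) (pa_measurable (hB.2.1 j)) (hB.1 j)]
    refine Finset.sum_congr rfl fun s _ => ?_
    simp only [hIdef]
    rw [hBvol j s, ENNReal.toReal_ofReal (mul_nonneg (hlenpos s).le (hy0 j s))]
    ring
  -- optimality of A' in fractional terms
  have hA'alloc : IsAlloc A' := hA'.1
  have hA'val : ∀ j, cakeval (g j) (A' j) = ∑ s, xal A' j s * V j s := by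
    intro j
    simp only [hVdef]
    exact hxalval (g j) (cg j) (hcg j) A' hA'alloc j
  have hoptg : ∀ y : Fin (n + 1) → Fin m → ℝ,
      (∀ j s, 0 ≤ y j s) → (∀ s, ∑ j, y j s ≤ 1) →
      (∏ j, ∑ s, y j s * V j s) ≤ ∏ j, ∑ s, xal A' j s * V j s := by
    intro y hy0 hycol
    obtain ⟨B, hB, hBv⟩ := hBval y hy0 hycol
    have h1 : nashProd g B = ∏ j, ∑ s, y j s * V j s := by
      refine Finset.prod_congr rfl fun j _ => ?_
      simp only [hVdef]
      exact hBv (g j) (cg j) (hcg j) j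
    have h2 : nashProd g A' = ∏ j, ∑ s, xal A' j s * V j s :=
      Finset.prod_congr rfl fun j _ => hA'val j
    rw [← h1, ← h2]
    exact hA'.2 B hB
  -- total cake values
  have hcake : ∀ (h : ℝ → ℝ) (cc : Fin m → ℝ),
      (∀ s, ∀ x ∈ Set.Ico (r s.castSucc) (r s.succ), h x = cc s) →
      cakeval h (Set.Icc 0 1) = ∑ s, cc s * len s := by
    intro h cc hcc
    rw [hval h cc hcc (Set.Icc 0 1) measurableSet_Icc (subset_refl _)]
    refine Finset.sum_congr rfl fun s _ => ?_
    rw [Set.inter_eq_self_of_subset_right (hIsub s), hvolI s,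
      ENNReal.toReal_ofReal (hlenpos s).le]
  -- positivity of the optimum values
  have hu : ∀ j, 0 < ∑ s, xal A' j s * V j s := by
    have hyE0 : ∀ (j : Fin (n + 1)) (s : Fin m), 0 ≤ (1 : ℝ) / (n + 1) := by
      intro _ _; positivity
    have hyEcol : ∀ s : Fin m, ∑ _j : Fin (n + 1), (1 : ℝ) / (n + 1) ≤ 1 := by
      intro s
      rw [Finset.sum_const, Finset.card_univ, Fintype.card_fin]
      rw [nsmul_eq_mul]
      rw [mul_one_div, div_le_one (by positivity)]
      push_cast
      try linarith
    have hopt1 := hoptg (fun _ _ => 1 / (n + 1)) hyE0 hyEcol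
    have hpos : ∀ j : Fin (n + 1), 0 < ∑ s, (1 : ℝ) / (n + 1) * V j s := by
      intro j
      have h1 : ∑ s, (1 : ℝ) / (n + 1) * V j s = 1 / (n + 1) * cakeval (g j) (Set.Icc 0 1) := by
        rw [hcake (g j) (cg j) (hcg j), Finset.mul_sum]
      rw [h1]
      have := (hgval j).2.2
      positivity
    have hprodpos : 0 < ∏ j, ∑ s, (1 : ℝ) / (n + 1) * V j s :=
      Finset.prod_pos fun j _ => hpos j
    have hprodle := lt_of_lt_of_le hprodpos hopt1
    intro j
    rcases (Finset.sum_nonneg fun s _ => mul_nonneg (hxal0 A' j s) (hVnn j s)).eq_or_lt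
      with h | h
    · exfalso
      have : (∏ k, ∑ s, xal A' k s * V k s) = 0 :=
        Finset.prod_eq_zero (Finset.mem_univ j) h.symm
      rw [this] at hprodle
      exact lt_irrefl 0 hprodle
    · exact h
  -- apply the price bound with y = fractions of A1
  have hA1alloc : IsAlloc A1 := hA1.1
  have hprice := pa_price_bound V hVnn (xal A') (hxal0 A') (hxalcol A' hA'alloc) hu hoptg
    (xal A1) (hxal0 A1) (hxalcol A1 hA1alloc) 0
  -- rewrite both sides of the price bound
  have hcgeq : ∀ j : Fin (n + 1), j ≠ 0 → cg j = cf j := by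
    intro j hj; rw [hcgdef]; simp [hj]
  have hgeq : ∀ j : Fin (n + 1), j ≠ 0 → g j = f j := by
    intro j hj; rw [hgdef]; exact Function.update_of_ne hj _ _
  have hPA1eq : (∏ j ∈ Finset.univ.erase 0, cakeval (f j) (A1 j))
      = ∏ j ∈ Finset.univ.erase 0, ∑ s, xal A1 j s * V j s := by
    refine Finset.prod_congr rfl fun j hj => ?_
    have hj0 := (Finset.mem_erase.1 hj).1
    simp only [hVdef]
    have := hxalval (f j) (cf j) (hcf j) A1 hA1alloc j
    rw [this]
    exact Finset.sum_congr rfl fun s _ => by rw [hcgeq j hj0]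
  have hQ'eq : (∏ j ∈ Finset.univ.erase 0, cakeval (f j) (A' j))
      = ∏ j ∈ Finset.univ.erase 0, ∑ s, xal A' j s * V j s := by
    refine Finset.prod_congr rfl fun j hj => ?_
    have hj0 := (Finset.mem_erase.1 hj).1
    rw [← hgeq j hj0]
    exact hA'val j
  have hkey : (∏ j ∈ Finset.univ.erase 0, cakeval (f j) (A1 j))
      ≤ Real.exp 1 * ∏ j ∈ Finset.univ.erase 0, cakeval (f j) (A' j) := by
    rw [hPA1eq, hQ'eq]
    exact hprice
  -- step (1): optimality of A for the true profile
  have hstep1 : cakeval (f 0) (A' 0) * ∏ j ∈ Finset.univ.erase 0, cakeval (f j) (A' j)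
      ≤ cakeval (f 0) (A 0) * ∏ j ∈ Finset.univ.erase 0, cakeval (f j) (A j) := by
    have h1 := hA.2 A' hA'.1
    rw [nashProd, nashProd] at h1
    rw [← Finset.mul_prod_erase Finset.univ _ (Finset.mem_univ 0),
      ← Finset.mul_prod_erase Finset.univ _ (Finset.mem_univ 0)] at h1
    exact h1
  -- positivity of Q'
  have hQ'pos : 0 < ∏ j ∈ Finset.univ.erase 0, cakeval (f j) (A' j) := by
    rw [hQ'eq]
    exact Finset.prod_pos fun j _ => hu j
  -- positivity of P_{A1}
  have hPA1pos : 0 < ∏ j ∈ Finset.univ.erase 0, cakeval (f j) (A1 j) := by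
    set y0 : Fin (n + 1) → Fin m → ℝ :=
      fun j s => if j = 0 then 0 else 1 / (n + 1) with hy0def
    have hy00 : ∀ j s, 0 ≤ y0 j s := by
      intro j s; simp only [hy0def]; split <;> positivity
    have hy0col : ∀ s, ∑ j, y0 j s ≤ 1 := by
      intro s
      have : ∑ j, y0 j s ≤ ∑ _j : Fin (n + 1), (1 : ℝ) / (n + 1) := by
        refine Finset.sum_le_sum fun j _ => ?_
        simp only [hy0def]; split
        · positivity
        · exact le_refl _
      refine this.trans ?_
      rw [Finset.sum_const, Finset.card_univ, Fintype.card_fin, nsmul_eq_mul,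
        mul_one_div, div_le_one (by positivity)]
      push_cast
      try linarith
    obtain ⟨B0, hB0, hB0v⟩ := hBval y0 hy00 hy0col
    set B0' : Fin (n + 1) → Set ℝ := Function.update B0 0 ∅ with hB0'def
    have hB0'alloc : IsAlloc B0' := by
      refine ⟨?_, ?_, ?_⟩
      · intro i
        rcases eq_or_ne i 0 with rfl | hi
        · rw [hB0'def, Function.update_self]; exact Set.empty_subset _
        · rw [hB0'def, Function.update_of_ne hi]; exact hB0.1 i
      · intro i
        rcases eq_or_ne i 0 with rfl | hi
        · rw [hB0'def, Function.update_self]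
          exact ⟨0, Fin.elim0, Fin.elim0, by simp⟩
        · rw [hB0'def, Function.update_of_ne hi]; exact hB0.2.1 i
      · intro i j hij
        rcases eq_or_ne i 0 with rfl | hi
        · rw [hB0'def, Function.update_self]; simp
        rcases eq_or_ne j 0 with rfl | hj
        · rw [hB0'def, Function.update_self]; simp
        · rw [hB0'def, Function.update_of_ne hi, Function.update_of_ne hj]
          exact hB0.2.2 hij
    have hB0'0 : B0' 0 = ∅ := by rw [hB0'def]; exact Function.update_self _ _ _
    have hle := hA1.2.2 B0' hB0'alloc hB0'0
    have heq : (∏ j ∈ Finset.univ.erase 0, cakeval (f j) (B0' j))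
        = ∏ j ∈ Finset.univ.erase (0 : Fin (n + 1)),
            (1 / (n + 1) * cakeval (f j) (Set.Icc 0 1)) := by
      refine Finset.prod_congr rfl fun j hj => ?_
      have hj0 := (Finset.mem_erase.1 hj).1
      rw [hB0'def, Function.update_of_ne hj0]
      rw [hB0v (f j) (cf j) (hcf j) j]
      have h1 : ∀ s : Fin m, y0 j s = 1 / (n + 1) := by
        intro s; simp only [hy0def]; rw [if_neg hj0]
      rw [hcake (f j) (cf j) (hcf j), Finset.mul_sum]
      exact Finset.sum_congr rfl fun s _ => by rw [h1 s]
    have hpos : 0 < ∏ j ∈ Finset.univ.erase (0 : Fin (n + 1)),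
        (1 / (n + 1) * cakeval (f j) (Set.Icc 0 1)) := by
      refine Finset.prod_pos fun j _ => ?_
      have := (hf j).2.2
      positivity
    calc (0:ℝ) < ∏ j ∈ Finset.univ.erase (0 : Fin (n + 1)),
          (1 / (n + 1) * cakeval (f j) (Set.Icc 0 1)) := hpos
      _ = ∏ j ∈ Finset.univ.erase 0, cakeval (f j) (B0' j) := heq.symm
      _ ≤ _ := hle
  -- final arithmetic
  set α := cakeval (f 0) (A' 0) with hα
  set β := cakeval (f 0) (A 0) with hβ
  set PA := ∏ j ∈ Finset.univ.erase (0 : Fin (n + 1)), cakeval (f j) (A j) with hPA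
  set PA1 := ∏ j ∈ Finset.univ.erase (0 : Fin (n + 1)), cakeval (f j) (A1 j) with hPA1
  set Q' := ∏ j ∈ Finset.univ.erase (0 : Fin (n + 1)), cakeval (f j) (A' j) with hQ'
  have hβ0 : 0 ≤ β := pa_cakeval_nonneg (hf 0).2.1 (pa_measurable (hA.1.2.1 0))
  have hPA0 : 0 ≤ PA := Finset.prod_nonneg fun j _ =>
    pa_cakeval_nonneg (hf j).2.1 (pa_measurable (hA.1.2.1 j))
  have h1 : α ≤ β * PA / Q' := by
    rw [le_div_iff₀ hQ'pos]
    calc α * Q' ≤ β * PA := hstep1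
      _ = β * PA := rfl
  refine h1.trans ?_
  have h2 : Real.exp 1 * (PA / PA1 * β) = Real.exp 1 * PA * β / PA1 := by
    field_simp
  rw [h2, div_le_div_iff₀ hQ'pos hPA1pos]
  have h3 : PA1 ≤ Real.exp 1 * Q' := hkey
  nlinarith [mul_nonneg hβ0 hPA0, mul_le_mul_of_nonneg_left h3 (mul_nonneg hβ0 hPA0)]
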